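/- Let m ≥ 1 be an integer and let c : {1,2,3,…} → ℂ satisfy Σ_{n=1}^∞ |c_n| < ∞. For λ ∈ ℂ that is not a positive integer define h(λ) = λ^m · Σ_{n=1}^∞ c_n/(n − λ). If h(λ + 1) = h(λ) for every λ ∈ ℂ such that neither λ nor λ + 1 is a positive integer (i.e. h is periodic with period 1), then c_n = 0 for every n ≥ 1, and consequently h is identically zero. -/

import Mathlib

open Filter Topology

namespace PPF

noncomputable def z (k j : ℕ) : ℂ := (k : ℂ) + ((1 / (j + 1) : ℝ) : ℂ) * Complex.I

lemma z_im (k j : ℕ) : (z k j).im = 1 / (j + 1) := by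
  rw [z, Complex.add_im, Complex.natCast_im, Complex.mul_I_im, Complex.ofReal_re, zero_add]

lemma z_im_pos (k j : ℕ) : 0 < (z k j).im := by
  rw [z_im]; positivity

lemma z_ne_nat (k j n : ℕ) : z k j ≠ (n : ℂ) := by
  intro h
  have h2 := congrArg Complex.im h
  rw [z_im] at h2
  simp at h2
  have : (0:ℝ) < 1 / (j + 1) := by positivity
  simp [h2] at this

lemma z_succ (k j : ℕ) : z (k + 1) j = z k j + 1 := by
  simp only [z]
  push_cast
  ring

lemma z_sub_re (k j n : ℕ) : ((n + 1 : ℂ) - z k j).re = (n + 1 : ℝ) - k := by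
  simp [z]

lemma norm_sub_ge_im (lam : ℂ) (n : ℕ) : |lam.im| ≤ ‖(n + 1 : ℂ) - lam‖ := by
  have h1 : ((n + 1 : ℂ) - lam).im = -lam.im := by simp
  calc |lam.im| = |((n + 1 : ℂ) - lam).im| := by rw [h1, abs_neg]
    _ ≤ ‖(n + 1 : ℂ) - lam‖ := Complex.abs_im_le_norm _
    _ = ‖(n + 1 : ℂ) - lam‖ := rfl

lemma norm_sub_ge_one (k j n : ℕ) (hne : n + 1 ≠ k) :
    (1 : ℝ) ≤ ‖(n + 1 : ℂ) - z k j‖ := by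
  have h1 : |((n + 1 : ℂ) - z k j).re| ≤ ‖(n + 1 : ℂ) - z k j‖ := by
    calc |((n + 1 : ℂ) - z k j).re| ≤ ‖(n + 1 : ℂ) - z k j‖ :=
        Complex.abs_re_le_norm _
      _ = _ := rfl
  refine le_trans ?_ h1
  rw [z_sub_re]
  have hz : ((n : ℤ) + 1) - (k : ℤ) ≠ 0 := by
    intro h; apply hne; omega
  have := Int.one_le_abs hz
  have : (1 : ℝ) ≤ |(((n : ℤ) + 1 - k : ℤ) : ℝ)| := by
    rw [← Int.cast_abs]; exact_mod_cast this
  convert this using 2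
  rfl
  push_cast
  ring

lemma summable_div (c : ℕ → ℂ) (hc : Summable fun n : ℕ => ‖c (n + 1)‖)
    (lam : ℂ) (hlam : lam.im ≠ 0) :
    Summable fun n : ℕ => c (n + 1) / ((n + 1 : ℂ) - lam) := by
  have him : 0 < |lam.im| := abs_pos.mpr hlam
  refine Summable.of_norm_bounded (g := fun n => ‖c (n + 1)‖ * |lam.im|⁻¹)
    (hc.mul_right _) ?_
  intro n
  rw [norm_div, div_eq_mul_inv]
  exact mul_le_mul_of_nonneg_left
    (inv_anti₀ him (norm_sub_ge_im lam n)) (norm_nonneg _)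


lemma norm_z_sub (k j : ℕ) : ‖z k j - (k : ℂ)‖ = 1 / (j + 1) := by
  have : z k j - (k : ℂ) = ((1 / (j + 1) : ℝ) : ℂ) * Complex.I := by
    rw [z]; ring
  rw [this, norm_mul, Complex.norm_real, Complex.norm_I, mul_one,
    Real.norm_eq_abs, abs_of_pos (by positivity)]

lemma tendsto_z (k : ℕ) : Tendsto (fun j => z k j) atTop (𝓝 (k : ℂ)) := by
  have h0 : Tendsto (fun j : ℕ => ((1 / (j + 1) : ℝ) : ℂ)) atTop (𝓝 ((0:ℝ):ℂ)) :=
    (Complex.continuous_ofReal.tendsto _).comp tendsto_one_div_add_atTop_nhds_zero_nat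
  have := (h0.mul_const Complex.I).const_add (k : ℂ)
  simpa [z] using this

lemma key_pos (m : ℕ) (c : ℕ → ℂ) (hc : Summable fun n : ℕ => ‖c (n + 1)‖)
    (k : ℕ) (hk : 1 ≤ k) :
    Tendsto (fun j => (z k j - k) * ((z k j) ^ m * ∑' n : ℕ, c (n + 1) / ((n + 1 : ℂ) - z k j)))
      atTop (𝓝 (-((k : ℂ) ^ m * c k))) := by
  obtain ⟨l, rfl⟩ : ∃ l, k = l + 1 := ⟨k - 1, by omega⟩
  set k := l + 1 with hk'
  set C : ℝ := ∑' n : ℕ, ‖c (n + 1)‖ with hC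
  set T : ℕ → ℂ := fun j => ∑' n : ℕ, if n = l then 0 else c (n + 1) / ((n + 1 : ℂ) - z k j)
    with hT
  have hsplit : ∀ j, ∑' n : ℕ, c (n + 1) / ((n + 1 : ℂ) - z k j)
      = c k / ((k : ℂ) - z k j) + T j := by
    intro j
    have hs := summable_div c hc (z k j) (z_im_pos k j).ne'
    have h2 := Summable.tsum_eq_add_tsum_ite hs l
    rw [h2, hT]
    congr 2
    rw [hk']
    push_cast
    ring
  have hTnorm : ∀ j, ‖T j‖ ≤ C := by
    intro j
    have hle : ∀ n : ℕ,
        ‖if n = l then (0:ℂ) else c (n + 1) / ((n + 1 : ℂ) - z k j)‖ ≤ ‖c (n + 1)‖ := by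
      intro n
      by_cases hn : n = l
      · simp [hn]
      · simp only [hn, if_false]
        rw [norm_div, div_eq_mul_inv]
        have h1 : (1:ℝ) ≤ ‖(n + 1 : ℂ) - z k j‖ := norm_sub_ge_one k j n (by omega)
        calc ‖c (n+1)‖ * ‖(n + 1 : ℂ) - z k j‖⁻¹ ≤ ‖c (n+1)‖ * 1 :=
              mul_le_mul_of_nonneg_left (inv_le_one_of_one_le₀ h1) (norm_nonneg _)
          _ = ‖c (n+1)‖ := mul_one _
    have hs : Summable fun n : ℕ =>
        ‖if n = l then (0:ℂ) else c (n + 1) / ((n + 1 : ℂ) - z k j)‖ :=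
      Summable.of_nonneg_of_le (fun n => norm_nonneg _) hle hc
    calc ‖T j‖ ≤ ∑' n : ℕ, ‖if n = l then (0:ℂ) else c (n + 1) / ((n + 1 : ℂ) - z k j)‖ :=
          norm_tsum_le_tsum_norm hs
      _ ≤ C := Summable.tsum_le_tsum hle hs hc
  -- the error term tends to zero
  have hE : Tendsto (fun j => (z k j - k) * T j) atTop (𝓝 0) := by
    have hg : Tendsto (fun j : ℕ => (1 / (j + 1 : ℝ)) * C) atTop (𝓝 0) := by
      have := tendsto_one_div_add_atTop_nhds_zero_nat.mul_const C
      simpa using this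
    refine squeeze_zero_norm (fun j => ?_) hg
    rw [norm_mul, norm_z_sub]
    exact mul_le_mul_of_nonneg_left (hTnorm j) (by positivity)
  -- main term
  have hmain : ∀ j, (z k j - k) * ((z k j) ^ m * ∑' n : ℕ, c (n + 1) / ((n + 1 : ℂ) - z k j))
      = (z k j) ^ m * (-c k + (z k j - k) * T j) := by
    intro j
    rw [hsplit j]
    have hzk : ((k : ℕ) : ℂ) - z k j ≠ 0 := sub_ne_zero.mpr (Ne.symm (z_ne_nat k j k))
    field_simp [hzk]
    ring
  have hpow : Tendsto (fun j => (z k j) ^ m) atTop (𝓝 ((k : ℂ) ^ m)) := (tendsto_z k).pow m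
  have hfin : Tendsto (fun j => (z k j) ^ m * (-c k + (z k j - k) * T j)) atTop
      (𝓝 ((k : ℂ) ^ m * (-c k + 0))) := hpow.mul ((tendsto_const_nhds).add hE)
  rw [add_zero, mul_neg] at hfin
  exact Tendsto.congr (fun j => (hmain j).symm) hfin

lemma key_zero (m : ℕ) (c : ℕ → ℂ) (hc : Summable fun n : ℕ => ‖c (n + 1)‖) :
    Tendsto (fun j => (z 0 j - (0:ℕ)) * ((z 0 j) ^ m * ∑' n : ℕ, c (n + 1) / ((n + 1 : ℂ) - z 0 j)))
      atTop (𝓝 0) := by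
  set C : ℝ := ∑' n : ℕ, ‖c (n + 1)‖ with hC
  have hSnorm : ∀ j, ‖∑' n : ℕ, c (n + 1) / ((n + 1 : ℂ) - z 0 j)‖ ≤ C := by
    intro j
    have hle : ∀ n : ℕ, ‖c (n + 1) / ((n + 1 : ℂ) - z 0 j)‖ ≤ ‖c (n + 1)‖ := by
      intro n
      rw [norm_div, div_eq_mul_inv]
      have h1 : (1:ℝ) ≤ ‖(n + 1 : ℂ) - z 0 j‖ := norm_sub_ge_one 0 j n (by omega)
      calc ‖c (n+1)‖ * ‖(n + 1 : ℂ) - z 0 j‖⁻¹ ≤ ‖c (n+1)‖ * 1 :=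
            mul_le_mul_of_nonneg_left (inv_le_one_of_one_le₀ h1) (norm_nonneg _)
        _ = ‖c (n+1)‖ := mul_one _
    have hs : Summable fun n : ℕ => ‖c (n + 1) / ((n + 1 : ℂ) - z 0 j)‖ :=
      Summable.of_nonneg_of_le (fun n => norm_nonneg _) hle hc
    calc ‖∑' n : ℕ, c (n + 1) / ((n + 1 : ℂ) - z 0 j)‖
        ≤ ∑' n : ℕ, ‖c (n + 1) / ((n + 1 : ℂ) - z 0 j)‖ := norm_tsum_le_tsum_norm hs
      _ ≤ C := Summable.tsum_le_tsum hle hs hc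
  have h1 : Tendsto (fun j => ‖z 0 j‖) atTop (𝓝 0) := by
    have := (tendsto_z 0).norm
    simpa using this
  have hg : Tendsto (fun j : ℕ => ‖z 0 j‖ ^ (m + 1) * C) atTop (𝓝 0) := by
    have h2 : Tendsto (fun j => ‖z 0 j‖ ^ (m + 1) * C) atTop (𝓝 (0 ^ (m + 1) * C)) :=
      (h1.pow (m + 1)).mul_const C
    simpa using h2
  refine squeeze_zero_norm (fun j => ?_) hg
  rw [norm_mul, norm_mul]
  simp only [Nat.cast_zero, sub_zero]
  rw [← mul_assoc, ← norm_pow, ← norm_mul, ← pow_succ']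
  exact mul_le_mul_of_nonneg_left (hSnorm j) (norm_nonneg _)

end PPF
/-- If `h(λ) = λ^m Σ_{n≥1} c_n/(n - λ)` (with `Σ|c_n| < ∞`) is periodic with period 1
on the complement of the positive integers, then all `c_n` vanish and `h` is
identically zero there.  Here `c : ℕ → ℂ` and `c (n+1)` encodes `c_n` for `n ≥ 1`. -/
theorem periodic_partial_fractions_vanish (m : ℕ) (hm : 1 ≤ m) (c : ℕ → ℂ)
    (hc : Summable fun n : ℕ => ‖c (n + 1)‖)
    (h : ℂ → ℂ)
    (hdef : ∀ lam : ℂ, (∀ n : ℕ, 0 < n → lam ≠ (n : ℂ)) →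
      h lam = lam ^ m * ∑' n : ℕ, c (n + 1) / ((n + 1 : ℂ) - lam))
    (hper : ∀ lam : ℂ,
      (∀ n : ℕ, 0 < n → lam ≠ (n : ℂ) ∧ lam + 1 ≠ (n : ℂ)) → h (lam + 1) = h lam) :
    (∀ n : ℕ, 1 ≤ n → c n = 0) ∧
      ∀ lam : ℂ, (∀ n : ℕ, 0 < n → lam ≠ (n : ℂ)) → h lam = 0 := by
  have hdefz : ∀ k j : ℕ, h (PPF.z k j) =
      (PPF.z k j) ^ m * ∑' n : ℕ, c (n + 1) / ((n + 1 : ℂ) - PPF.z k j) :=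
    fun k j => hdef (PPF.z k j) (fun n _ => PPF.z_ne_nat k j n)
  have limA : ∀ k : ℕ, 1 ≤ k →
      Filter.Tendsto (fun j => (PPF.z k j - (k : ℂ)) * h (PPF.z k j)) Filter.atTop
        (nhds (-((k : ℂ) ^ m * c k))) := by
    intro k hk
    exact (PPF.key_pos m c hc k hk).congr (fun j => by rw [hdefz k j])
  have lim0 : Filter.Tendsto (fun j => (PPF.z 0 j - ((0:ℕ) : ℂ)) * h (PPF.z 0 j)) Filter.atTop
      (nhds 0) := by
    exact (PPF.key_zero m c hc).congr (fun j => by rw [hdefz 0 j])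
  have shift : ∀ k j : ℕ,
      (PPF.z (k + 1) j - ((k + 1 : ℕ) : ℂ)) * h (PPF.z (k + 1) j)
        = (PPF.z k j - (k : ℂ)) * h (PPF.z k j) := by
    intro k j
    have h1 : PPF.z (k + 1) j = PPF.z k j + 1 := PPF.z_succ k j
    have h2 : h (PPF.z k j + 1) = h (PPF.z k j) := by
      apply hper
      intro n hn
      exact ⟨PPF.z_ne_nat k j n, by rw [← h1]; exact PPF.z_ne_nat (k + 1) j n⟩
    rw [h1, h2]
    push_cast
    ring
  have rel : ∀ k : ℕ, ((k + 1 : ℕ) : ℂ) ^ m * c (k + 1)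
      = if k = 0 then 0 else (k : ℂ) ^ m * c k := by
    intro k
    have hL := limA (k + 1) (by omega)
    have hR : Filter.Tendsto (fun j => (PPF.z (k + 1) j - ((k + 1 : ℕ) : ℂ)) * h (PPF.z (k + 1) j))
        Filter.atTop (nhds (if k = 0 then 0 else -((k : ℂ) ^ m * c k))) := by
      refine Filter.Tendsto.congr (fun j => (shift k j).symm) ?_
      by_cases hk : k = 0
      · subst hk; simpa using lim0
      · simp only [hk, if_false]
        exact limA k (by omega)
    have huniq := tendsto_nhds_unique hL hR
    by_cases hk : k = 0
    · subst hk
      simp only [if_true] at huniq ⊢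
      simpa using neg_eq_zero.mp huniq
    · simp only [hk, if_false] at huniq ⊢
      exact neg_injective huniq
  have main : ∀ k : ℕ, ((k + 1 : ℕ) : ℂ) ^ m * c (k + 1) = 0 := by
    intro k
    induction k with
    | zero => simpa using rel 0
    | succ n ih =>
      rw [rel (n + 1)]
      simpa using ih
  have vanish : ∀ n : ℕ, 1 ≤ n → c n = 0 := by
    intro n hn
    obtain ⟨l, rfl⟩ : ∃ l, n = l + 1 := ⟨n - 1, by omega⟩
    have h0 := main l
    have hne : ((l + 1 : ℕ) : ℂ) ^ m ≠ 0 :=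
      pow_ne_zero _ (by exact_mod_cast Nat.succ_ne_zero l)
    exact (mul_eq_zero.mp h0).resolve_left hne
  refine ⟨vanish, ?_⟩
  intro lam hlam
  rw [hdef lam hlam]
  have hz : (fun n : ℕ => c (n + 1) / ((n + 1 : ℂ) - lam)) = fun _ => 0 :=
    funext fun n => by rw [vanish (n + 1) (by omega), zero_div]
  rw [hz, tsum_zero, mul_zero]
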